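/- Let F be a normalized finite Orlicz function with F(s) > 0 for all s > 0 and lim_{t→∞} F(t)/t = ∞, and let G ∈ E_F. Define the Orlicz function Ĝ on [0,∞) by Ĝ(t) = G(t) for 0 ≤ t ≤ 1/2 and Ĝ(t) = G(1/2) + 2(1 − G(1/2))(t − 1/2) for t ≥ 1/2 (so Ĝ is linear on [1/2,∞) with Ĝ(1) = 1). Then there exist pairwise disjoint Borel subsets (A_n)_{n∈ℕ} of [0,1] with positive Lebesgue measure, reals s_n > 0 with F(s_n)·|A_n| = 1, and a constant C ≥ 1, such that for every finitely supported real sequence (a_n): C^{-1} N_G(a) ≤ ‖∑_n a_n s_n χ_{A_n}‖_{L_F} ≤ C N_G(a), where ‖g‖_{L_F} = inf{t > 0 : ∫_0^1 F(|g|/t) dx ≤ 1} is the Luxemburg norm on [0,1] and N_G(a) = inf{t > 0 : ∑_n Ĝ(|a_n|/t) ≤ 1} is the Luxemburg norm of the Orlicz sequence space ℓ_G. In other words, (s_n χ_{A_n})_{n∈ℕ} is a disjointly supported sequence in L_F([0,1]) equivalent to the unit vector system of ℓ_G. -/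

import Mathlib

open Set Filter Topology MeasureTheory

/-- `G` belongs to `E_F = ⋂_{b ≥ 0} E_{F,b}`, where `E_{F,b}` is the closure, in the topology
of uniform convergence on `[0,1/2]`, of the set of flows `{F_s : s > b}`,
`F_s (t) = F (s t) / F s`. (Only the values of `G` on `[0,1/2]` are relevant.) -/
def MemFlowClosure (F : ℝ → ℝ) (G : ℝ → ℝ) : Prop :=
  ∀ b : ℝ, 0 ≤ b → ∀ ε : ℝ, 0 < ε → ∃ s : ℝ, b < s ∧
    ∀ t ∈ Icc (0:ℝ) (1/2), |F (s * t) / F s - G t| ≤ ε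

private lemma F_scale {F : ℝ → ℝ} (hFconv : ConvexOn ℝ (Ici (0:ℝ)) F) (hF0 : F 0 = 0)
    {x l : ℝ} (hx : 0 ≤ x) (h0 : 0 ≤ l) (h1 : l ≤ 1) : F (l * x) ≤ l * F x := by
  have h := hFconv.2 (mem_Ici.mpr le_rfl) (mem_Ici.mpr hx)
      (by linarith : (0:ℝ) ≤ 1 - l) h0 (by ring)
  simpa [hF0, smul_eq_mul] using h

private lemma G_nonneg {F G : ℝ → ℝ} (hFmono : MonotoneOn F (Ici (0:ℝ))) (hF0 : F 0 = 0)
    (hFpos : ∀ s : ℝ, 0 < s → 0 < F s) (hG : MemFlowClosure F G)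
    {p : ℝ} (hp : p ∈ Icc (0:ℝ) (1/2)) : 0 ≤ G p := by
  by_contra hneg
  push_neg at hneg
  obtain ⟨s, hs, hc⟩ := hG 0 le_rfl (-G p / 2) (by linarith)
  have h1 := hc p hp
  have h2 : 0 ≤ F (s * p) / F s :=
    div_nonneg (hF0 ▸ hFmono (le_refl (0:ℝ)) (mem_Ici.mpr (mul_nonneg hs.le hp.1))
      (mul_nonneg hs.le hp.1)) (hFpos s hs).le
  rw [abs_le] at h1
  linarith [h1.2]

private lemma G_scale {F G : ℝ → ℝ} (hFconv : ConvexOn ℝ (Ici (0:ℝ)) F) (hF0 : F 0 = 0)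
    (hFpos : ∀ s : ℝ, 0 < s → 0 < F s) (hG : MemFlowClosure F G)
    {p l : ℝ} (hp : p ∈ Icc (0:ℝ) (1/2)) (h0 : 0 ≤ l) (h1 : l ≤ 1) :
    G (l * p) ≤ l * G p := by
  refine le_of_forall_pos_le_add (fun ε hε => ?_)
  obtain ⟨s, hs, hc⟩ := hG 0 le_rfl (ε / 2) (by linarith)
  have hFs := hFpos s hs
  have hlp : l * p ∈ Icc (0:ℝ) (1/2) := by
    constructor
    · exact mul_nonneg h0 hp.1
    · calc l * p ≤ 1 * p := by nlinarith [hp.1]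
        _ ≤ 1/2 := by linarith [hp.2]
  have h1' := hc _ hlp
  have h2' := hc p hp
  rw [abs_le] at h1' h2'
  have hkey : F (s * (l * p)) ≤ l * F (s * p) := by
    have := F_scale hFconv hF0 (mul_nonneg hs.le hp.1) h0 h1
    calc F (s * (l * p)) = F (l * (s * p)) := by ring_nf
      _ ≤ l * F (s * p) := this
  have hdiv : F (s * (l * p)) / F s ≤ l * (F (s * p) / F s) := by
    rw [← mul_div_assoc]
    exact div_le_div_of_nonneg_right hkey hFs.le
  nlinarith [h1'.1, h2'.2, hFs]

private lemma G_half {F G : ℝ → ℝ} (hFconv : ConvexOn ℝ (Ici (0:ℝ)) F) (hF0 : F 0 = 0)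
    (hFpos : ∀ s : ℝ, 0 < s → 0 < F s) (hG : MemFlowClosure F G) :
    G (1/2) ≤ 1/2 := by
  refine le_of_forall_pos_le_add (fun ε hε => ?_)
  obtain ⟨s, hs, hc⟩ := hG 0 le_rfl ε hε
  have hFs := hFpos s hs
  have h1 := hc (1/2) (by constructor <;> norm_num)
  rw [abs_le] at h1
  have hkey : F (s * (1/2)) ≤ (1/2) * F s := by
    have := F_scale hFconv hF0 hs.le (by norm_num : (0:ℝ) ≤ 1/2) (by norm_num)
    calc F (s * (1/2)) = F ((1/2) * s) := by ring_nf
      _ ≤ (1/2) * F s := this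
  have : F (s * (1/2)) / F s ≤ 1/2 := by
    rw [div_le_iff₀ hFs]; linarith
  linarith [h1.1]

private lemma geom_sum_half (m : ℕ) :
    ∑ k ∈ Finset.range m, ((1:ℝ)/2)^(k+1) = 1 - (1/2)^m := by
  induction m with
  | zero => simp
  | succ n ih => rw [Finset.sum_range_succ, ih]; ring

private lemma F_top {F : ℝ → ℝ} (hsuper : Tendsto (fun t : ℝ => F t / t) atTop atTop) :
    Tendsto F atTop atTop := by
  have h : ∀ᶠ t in atTop, t ≤ F t := by
    filter_upwards [hsuper.eventually_ge_atTop 1, eventually_ge_atTop (1:ℝ)] with t h1 h2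
    have ht : (0:ℝ) < t := by linarith
    have := (le_div_iff₀ ht).mp h1
    linarith
  exact tendsto_atTop_mono' atTop h tendsto_id

/-- Let `F` be a normalized finite Orlicz function with `F s > 0` for `s > 0`
and `F t / t → ∞`, and let `G ∈ E_F`. Let `Ĝ` be the Orlicz function agreeing with `G` on
`[0,1/2]` and linear on `[1/2,∞)` with `Ĝ 1 = 1`. Then there are pairwise disjoint Borel sets
`A n ⊆ [0,1]` of positive measure, reals `s n > 0` with `F (s n) * |A n| = 1`, and `C ≥ 1`
such that the disjointly supported sequence `(s n · χ_{A n})` in `L_F([0,1])` is `C`-equivalent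
to the unit vector system of the Orlicz sequence space `ℓ_G`: for all finitely supported `a`,
`C⁻¹ N_G(a) ≤ ‖∑ a n s n χ_{A n}‖_{L_F} ≤ C N_G(a)`. -/
theorem statement14 (F : ℝ → ℝ)
    (hFconv : ConvexOn ℝ (Ici (0:ℝ)) F) (hFmono : MonotoneOn F (Ici (0:ℝ)))
    (hF0 : F 0 = 0) (hF1 : F 1 = 1)
    (hFpos : ∀ s : ℝ, 0 < s → 0 < F s)
    (hsuper : Tendsto (fun t : ℝ => F t / t) atTop atTop)
    (G : ℝ → ℝ) (hG : MemFlowClosure F G)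
    (Ghat : ℝ → ℝ)
    (hGhat : ∀ t : ℝ,
      Ghat t = if t ≤ 1/2 then G t else G (1/2) + 2 * (1 - G (1/2)) * (t - 1/2)) :
    ∃ (A : ℕ → Set ℝ) (s : ℕ → ℝ) (C : ℝ),
      (∀ n, MeasurableSet (A n) ∧ A n ⊆ Icc (0:ℝ) 1 ∧ 0 < volume (A n)) ∧
      Pairwise (Function.onFun Disjoint A) ∧
      (∀ n, 0 < s n ∧ F (s n) * (volume (A n)).toReal = 1) ∧
      1 ≤ C ∧
      ∀ (Λ : Finset ℕ) (a : ℕ → ℝ),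
        C⁻¹ * sInf {t : ℝ | 0 < t ∧ ∑ n ∈ Λ, Ghat (|a n| / t) ≤ 1}
            ≤ sInf {t : ℝ | 0 < t ∧
                (∫ x in Icc (0:ℝ) 1,
                  F (|∑ n ∈ Λ, a n * (s n * (A n).indicator (fun _ => (1:ℝ)) x)| / t)) ≤ 1} ∧
        sInf {t : ℝ | 0 < t ∧
                (∫ x in Icc (0:ℝ) 1,
                  F (|∑ n ∈ Λ, a n * (s n * (A n).indicator (fun _ => (1:ℝ)) x)| / t)) ≤ 1}
            ≤ C * sInf {t : ℝ | 0 < t ∧ ∑ n ∈ Λ, Ghat (|a n| / t) ≤ 1} := by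
  have hFt := F_top hsuper
  have key : ∀ n : ℕ, ∃ s : ℝ, 0 < s ∧ (2:ℝ)^(n+1) ≤ F s ∧
      ∀ t ∈ Icc (0:ℝ) (1/2), |F (s * t) / F s - G t| ≤ (1/2)^(n+2) := by
    intro n
    obtain ⟨B, hB⟩ := eventually_atTop.mp (hFt.eventually_ge_atTop ((2:ℝ)^(n+1)))
    obtain ⟨sn, hs1, hs2⟩ := hG (max B 0) (le_max_right _ _) ((1/2)^(n+2)) (by positivity)
    exact ⟨sn, lt_of_le_of_lt (le_max_right B 0) hs1,
      hB sn ((le_max_left B 0).trans hs1.le), hs2⟩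
  choose s hspos hsge hsclose using key
  have hFs : ∀ n, 0 < F (s n) := fun n => hFpos _ (hspos n)
  have hinv_le : ∀ n : ℕ, (F (s n))⁻¹ ≤ (1/2)^(n+1) := by
    intro n
    have h1 : (F (s n))⁻¹ ≤ ((2:ℝ)^(n+1))⁻¹ :=
      inv_anti₀ (by positivity) (hsge n)
    calc (F (s n))⁻¹ ≤ ((2:ℝ)^(n+1))⁻¹ := h1
      _ = (1/2)^(n+1) := by rw [one_div, inv_pow]
  set c : ℕ → ℝ := fun n => ∑ k ∈ Finset.range n, (F (s k))⁻¹ with hc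
  have hcsucc : ∀ n, c (n+1) = c n + (F (s n))⁻¹ := fun n => Finset.sum_range_succ _ n
  have hcmono : ∀ i j, i ≤ j → c i ≤ c j := by
    intro i j hij
    exact Finset.sum_le_sum_of_subset_of_nonneg
      (Finset.range_subset_range.mpr hij) (fun k _ _ => (inv_nonneg.mpr (hFs k).le))
  have hcnonneg : ∀ n, 0 ≤ c n := fun n => by
    simpa [hc] using hcmono 0 n (Nat.zero_le n)
  have hcb : ∀ n, c (n+1) ≤ 1 := by
    intro n
    calc c (n+1) ≤ ∑ k ∈ Finset.range (n+1), ((1:ℝ)/2)^(k+1) :=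
          Finset.sum_le_sum (fun k _ => hinv_le k)
      _ = 1 - (1/2)^(n+1) := geom_sum_half (n+1)
      _ ≤ 1 := by nlinarith [pow_nonneg (by norm_num : (0:ℝ) ≤ 1/2) (n+1)]
  set A : ℕ → Set ℝ := fun n => Ico (c n) (c n + (F (s n))⁻¹) with hA
  have hvol : ∀ n, volume (A n) = ENNReal.ofReal ((F (s n))⁻¹) := by
    intro n; simp [hA, Real.volume_Ico]
  have hvolR : ∀ n, (volume (A n)).toReal = (F (s n))⁻¹ := by
    intro n; rw [hvol n, ENNReal.toReal_ofReal (inv_nonneg.mpr (hFs n).le)]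
  have hFnn : ∀ x : ℝ, 0 ≤ x → 0 ≤ F x := fun x hx =>
    hF0 ▸ hFmono (le_refl (0:ℝ)) (mem_Ici.mpr hx) hx
  have hAmeas : ∀ n, MeasurableSet (A n) := fun n => measurableSet_Ico
  have hAsub : ∀ n, A n ⊆ Icc (0:ℝ) 1 := by
    intro n
    rintro x ⟨h1, h2⟩
    have h3 := hcb n
    rw [hcsucc] at h3
    exact ⟨(hcnonneg n).trans h1, by linarith⟩
  have hdisj2 : ∀ i j, i < j → Disjoint (A i) (A j) := by
    intro i j h
    rw [Set.disjoint_left]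
    rintro x ⟨hx1, hx2⟩ ⟨hy1, hy2⟩
    have h1 : c (i+1) ≤ c j := hcmono _ _ h
    rw [hcsucc] at h1
    linarith
  refine ⟨A, s, 2, ?_, ?_, ?_, one_le_two, ?_⟩
  · intro n
    exact ⟨hAmeas n, hAsub n, by
      rw [hvol n]; exact ENNReal.ofReal_pos.mpr (inv_pos.mpr (hFs n))⟩
  · intro i j hij
    rcases hij.lt_or_gt with h | h
    · exact hdisj2 _ _ h
    · exact (hdisj2 _ _ h).symm
  · intro n
    exact ⟨hspos n, by rw [hvolR n]; exact mul_inv_cancel₀ (hFs n).ne'⟩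
  -- G and Ghat facts
  have hG0le : (0:ℝ) ≤ G (1/2) := G_nonneg hFmono hF0 hFpos hG ⟨by norm_num, le_rfl⟩
  have hGhalf : G (1/2) ≤ 1/2 := G_half hFconv hF0 hFpos hG
  have hGhat_nonneg : ∀ u : ℝ, 0 ≤ u → 0 ≤ Ghat u := by
    intro u hu; rw [hGhat]; split_ifs with h
    · exact G_nonneg hFmono hF0 hFpos hG ⟨hu, h⟩
    · push_neg at h; nlinarith
  have hGhat_le_one : ∀ u : ℝ, 0 ≤ u → Ghat u ≤ 1 → u ≤ 1 := by
    intro u hu h; rw [hGhat] at h; split_ifs at h with h'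
    · linarith
    · push_neg at h'
      nlinarith [mul_nonneg (by linarith : (0:ℝ) ≤ 1 - 2*G (1/2)) (by linarith : (0:ℝ) ≤ 2*u - 1)]
  have hGhat_small : ∀ u : ℝ, 0 ≤ u → u ≤ 1/2 → Ghat u ≤ u := by
    intro u h0 h1; rw [hGhat, if_pos h1]
    have h2 := G_scale hFconv hF0 hFpos hG (p := 1/2) ⟨by norm_num, le_rfl⟩
      (l := 2*u) (by linarith) (by linarith)
    have h3 : (2*u) * (1/2 : ℝ) = u := by ring
    rw [h3] at h2
    nlinarith
  have hGhat_div2 : ∀ u : ℝ, 0 ≤ u → u ≤ 1 → G (u/2) ≤ Ghat u / 2 := by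
    intro u h0 h1; rw [hGhat]; split_ifs with h
    · have h2 := G_scale hFconv hF0 hFpos hG (p := u) ⟨h0, h⟩
        (l := 1/2) (by norm_num) (by norm_num)
      have h3 : (1/2 : ℝ) * u = u/2 := by ring
      rw [h3] at h2
      linarith
    · push_neg at h
      have h2 := G_scale hFconv hF0 hFpos hG (p := 1/2) ⟨by norm_num, le_rfl⟩
        (l := u) h0 h1
      have h3 : u * (1/2 : ℝ) = u/2 := by ring
      rw [h3] at h2
      nlinarith [mul_nonneg (by linarith : (0:ℝ) ≤ 2*u - 1) (by linarith : (0:ℝ) ≤ 1 - 2*G (1/2))]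
  have hdisjne : ∀ i j, i ≠ j → Disjoint (A i) (A j) := by
    intro i j hij
    rcases hij.lt_or_gt with h | h
    · exact hdisj2 _ _ h
    · exact (hdisj2 _ _ h).symm
  intro Λ a
  -- the integral identity
  have hInt : ∀ t : ℝ, 0 < t →
      (∫ x in Icc (0:ℝ) 1,
        F (|∑ n ∈ Λ, a n * (s n * (A n).indicator (fun _ => (1:ℝ)) x)| / t))
        = ∑ n ∈ Λ, F (s n * |a n| / t) * (F (s n))⁻¹ := by
    intro t ht
    have hfun : ∀ x : ℝ,
        F (|∑ n ∈ Λ, a n * (s n * (A n).indicator (fun _ => (1:ℝ)) x)| / t)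
        = ∑ n ∈ Λ, (A n).indicator (fun _ => F (s n * |a n| / t)) x := by
      intro x
      by_cases hx : ∃ m ∈ Λ, x ∈ A m
      · obtain ⟨m, hmΛ, hxm⟩ := hx
        have hnot : ∀ n, n ≠ m → x ∉ A n := by
          intro n hnm hxn
          exact Set.disjoint_left.mp (hdisjne n m hnm) hxn hxm
        rw [Finset.sum_eq_single m
          (fun n _ hnm => by simp [Set.indicator_of_notMem (hnot n hnm)])
          (fun h => absurd hmΛ h),
          Finset.sum_eq_single m
          (fun n _ hnm => Set.indicator_of_notMem (hnot n hnm) _)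
          (fun h => absurd hmΛ h),
          Set.indicator_of_mem hxm, Set.indicator_of_mem hxm]
        have habs : |a m * (s m * 1)| = s m * |a m| := by
          rw [mul_one, abs_mul, abs_of_pos (hspos m), mul_comm]
        rw [habs]
      · push_neg at hx
        have h1 : ∀ n ∈ Λ, a n * (s n * (A n).indicator (fun _ => (1:ℝ)) x) = 0 := by
          intro n hn
          simp [Set.indicator_of_notMem (hx n hn)]
        rw [Finset.sum_eq_zero h1, Finset.sum_eq_zero
          (fun n hn => Set.indicator_of_notMem (hx n hn) _)]
        simp [hF0]
    simp only [hfun]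
    rw [MeasureTheory.integral_finset_sum Λ (fun n _ =>
      ((integrableOn_const (C := F (s n * |a n| / t)) measure_Icc_lt_top.ne).indicator (hAmeas n)))]
    refine Finset.sum_congr rfl (fun n _ => ?_)
    rw [MeasureTheory.integral_indicator (hAmeas n), setIntegral_const,
      measureReal_restrict_apply (hAmeas n),
      Set.inter_eq_self_of_subset_left (hAsub n), measureReal_def, hvolR n, smul_eq_mul, mul_comm]
  -- epsilon sum bound
  have hεsum : ∑ n ∈ Λ, ((1:ℝ)/2)^(n+2) ≤ 1/2 := by
    have h1 : Λ ⊆ Finset.range (Λ.sup id + 1) := fun n hn =>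
      Finset.mem_range.mpr (Nat.lt_succ_of_le (Finset.le_sup (f := id) hn))
    calc ∑ n ∈ Λ, ((1:ℝ)/2)^(n+2)
        ≤ ∑ n ∈ Finset.range (Λ.sup id + 1), ((1:ℝ)/2)^(n+2) :=
          Finset.sum_le_sum_of_subset_of_nonneg h1 (fun k _ _ => by positivity)
      _ = (1/2) * ∑ n ∈ Finset.range (Λ.sup id + 1), ((1:ℝ)/2)^(n+1) := by
          rw [Finset.mul_sum]; exact Finset.sum_congr rfl (fun k _ => by ring)
      _ ≤ 1/2 := by
          rw [geom_sum_half]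
          nlinarith [pow_nonneg (by norm_num : (0:ℝ) ≤ 1/2) (Λ.sup id + 1)]
  -- claim A : SG membership gives SF membership at 2t
  have claimA : ∀ t : ℝ, 0 < t → (∑ n ∈ Λ, Ghat (|a n| / t) ≤ 1) →
      ∑ n ∈ Λ, F (s n * |a n| / (2*t)) * (F (s n))⁻¹ ≤ 1 := by
    intro t ht hsum
    have hterm : ∀ n ∈ Λ, Ghat (|a n| / t) ≤ 1 := by
      intro n hn
      have h1 := Finset.single_le_sum (f := fun k => Ghat (|a k| / t))
        (fun k _ => hGhat_nonneg _ (div_nonneg (abs_nonneg _) ht.le)) hn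
      linarith
    have hu1 : ∀ n ∈ Λ, |a n| / t ≤ 1 := fun n hn =>
      hGhat_le_one _ (div_nonneg (abs_nonneg _) ht.le) (hterm n hn)
    have hbound : ∀ n ∈ Λ, F (s n * |a n| / (2*t)) * (F (s n))⁻¹
        ≤ Ghat (|a n| / t) / 2 + (1/2)^(n+2) := by
      intro n hn
      have h2t : (0:ℝ) < 2*t := by linarith
      have hv : |a n| / (2*t) ∈ Icc (0:ℝ) (1/2) := by
        refine ⟨div_nonneg (abs_nonneg _) h2t.le, ?_⟩
        have h1 := (div_le_one ht).mp (hu1 n hn)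
        rw [div_le_iff₀ h2t]; linarith
      have hc := hsclose n _ hv
      rw [abs_le] at hc
      have hG2 : G (|a n| / (2*t)) ≤ Ghat (|a n| / t) / 2 := by
        have h3 : |a n| / (2*t) = (|a n| / t) / 2 := by ring
        rw [h3]
        exact hGhat_div2 _ (div_nonneg (abs_nonneg _) ht.le) (hu1 n hn)
      have h4 : F (s n * |a n| / (2*t)) * (F (s n))⁻¹
          = F (s n * (|a n| / (2*t))) / F (s n) := by
        rw [mul_div_assoc]
        exact (div_eq_mul_inv _ _).symm
      rw [h4]
      linarith [hc.2]
    calc ∑ n ∈ Λ, F (s n * |a n| / (2*t)) * (F (s n))⁻¹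
        ≤ ∑ n ∈ Λ, (Ghat (|a n| / t) / 2 + (1/2)^(n+2)) := Finset.sum_le_sum hbound
      _ = (∑ n ∈ Λ, Ghat (|a n| / t)) / 2 + ∑ n ∈ Λ, ((1:ℝ)/2)^(n+2) := by
          rw [Finset.sum_add_distrib, Finset.sum_div]
      _ ≤ 1/2 + 1/2 := add_le_add (by linarith) hεsum
      _ = 1 := by norm_num
  -- claim B : SF membership gives SG membership at 2t
  have claimB : ∀ t : ℝ, 0 < t → (∑ n ∈ Λ, F (s n * |a n| / t) * (F (s n))⁻¹ ≤ 1) →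
      ∑ n ∈ Λ, Ghat (|a n| / (2*t)) ≤ 1 := by
    intro t ht hsum
    have h2t : (0:ℝ) < 2*t := by linarith
    have hterm : ∀ n ∈ Λ, F (s n * |a n| / t) * (F (s n))⁻¹ ≤ 1 := by
      intro n hn
      have h1 := Finset.single_le_sum
        (f := fun k => F (s k * |a k| / t) * (F (s k))⁻¹)
        (fun k _ => mul_nonneg
          (hFnn _ (div_nonneg (mul_nonneg (hspos k).le (abs_nonneg _)) ht.le)) (inv_nonneg.mpr (hFs k).le)) hn
      linarith
    have hu1 : ∀ n ∈ Λ, |a n| / t ≤ 1 := by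
      intro n hn
      by_contra hgt
      push_neg at hgt
      have hapos : 0 < |a n| / t := by linarith
      have hy : 0 < s n * (|a n| / t) := mul_pos (hspos n) hapos
      have hFy : 0 < F (s n * (|a n| / t)) := hFpos _ hy
      have hl : (|a n|/t)⁻¹ < 1 := inv_lt_one_of_one_lt₀ hgt
      have hl0 : 0 ≤ (|a n|/t)⁻¹ := inv_nonneg.mpr hapos.le
      have h3 : F (s n) ≤ (|a n|/t)⁻¹ * F (s n * (|a n| / t)) := by
        have h4 := F_scale hFconv hF0 hy.le hl0 hl.le
        have heq : (|a n|/t)⁻¹ * (s n * (|a n| / t)) = s n := by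
          have ha0 : |a n| ≠ 0 := by
            intro h0; rw [h0] at hapos; simp at hapos
          have ht0 : t ≠ 0 := ht.ne'
          field_simp
        rwa [heq] at h4
      have h5 : F (s n) < F (s n * (|a n| / t)) := by
        calc F (s n) ≤ (|a n|/t)⁻¹ * F (s n * (|a n| / t)) := h3
          _ < 1 * F (s n * (|a n| / t)) := mul_lt_mul_of_pos_right hl hFy
          _ = F (s n * (|a n| / t)) := one_mul _
      have h6 : s n * |a n| / t = s n * (|a n| / t) := by ring
      have h7 := hterm n hn
      rw [h6] at h7
      have h8 : 1 < F (s n * (|a n| / t)) * (F (s n))⁻¹ := by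
        rw [← div_eq_mul_inv]
        exact (one_lt_div (hFs n)).mpr h5
      linarith
    have hbound : ∀ n ∈ Λ, Ghat (|a n| / (2*t))
        ≤ F (s n * |a n| / t) * (F (s n))⁻¹ / 2 + (1/2)^(n+2) := by
      intro n hn
      have hv : |a n| / (2*t) ∈ Icc (0:ℝ) (1/2) := by
        refine ⟨div_nonneg (abs_nonneg _) h2t.le, ?_⟩
        have h1 := (div_le_one ht).mp (hu1 n hn)
        rw [div_le_iff₀ h2t]; linarith
      have hghat_eq : Ghat (|a n| / (2*t)) = G (|a n| / (2*t)) := by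
        rw [hGhat, if_pos hv.2]
      have hc := hsclose n _ hv
      rw [abs_le] at hc
      have h5 : s n * (|a n| / (2*t)) = (1/2) * (s n * |a n| / t) := by ring
      have h6 : F (s n * (|a n| / (2*t))) ≤ (1/2) * F (s n * |a n| / t) := by
        rw [h5]
        exact F_scale hFconv hF0 (div_nonneg (mul_nonneg (hspos n).le (abs_nonneg _)) ht.le)
          (by norm_num) (by norm_num)
      have h7 : F (s n * (|a n| / (2*t))) / F (s n)
          ≤ F (s n * |a n| / t) * (F (s n))⁻¹ / 2 := by
        rw [div_eq_mul_inv]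
        have := mul_le_mul_of_nonneg_right h6 (inv_nonneg.mpr (hFs n).le)
        calc F (s n * (|a n| / (2*t))) * (F (s n))⁻¹
            ≤ (1/2) * F (s n * |a n| / t) * (F (s n))⁻¹ := by linarith [this]
          _ = F (s n * |a n| / t) * (F (s n))⁻¹ / 2 := by ring
      rw [hghat_eq]
      linarith [hc.1]
    calc ∑ n ∈ Λ, Ghat (|a n| / (2*t))
        ≤ ∑ n ∈ Λ, (F (s n * |a n| / t) * (F (s n))⁻¹ / 2 + (1/2)^(n+2)) :=
          Finset.sum_le_sum hbound
      _ = (∑ n ∈ Λ, F (s n * |a n| / t) * (F (s n))⁻¹) / 2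
          + ∑ n ∈ Λ, ((1:ℝ)/2)^(n+2) := by
          rw [Finset.sum_add_distrib, Finset.sum_div]
      _ ≤ 1/2 + 1/2 := add_le_add (by linarith) hεsum
      _ = 1 := by norm_num
  set SGs : Set ℝ := {t : ℝ | 0 < t ∧ ∑ n ∈ Λ, Ghat (|a n| / t) ≤ 1} with hSGs
  set SFs : Set ℝ := {t : ℝ | 0 < t ∧
      (∫ x in Icc (0:ℝ) 1,
        F (|∑ n ∈ Λ, a n * (s n * (A n).indicator (fun _ => (1:ℝ)) x)| / t)) ≤ 1} with hSFs
  have hbddG : BddBelow SGs := ⟨0, fun x hx => hx.1.le⟩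
  have hbddF : BddBelow SFs := ⟨0, fun x hx => hx.1.le⟩
  have hsumabs : 0 ≤ ∑ n ∈ Λ, |a n| := Finset.sum_nonneg (fun n _ => abs_nonneg _)
  have hSGne : SGs.Nonempty := by
    have hTpos : (0:ℝ) < 2 * ∑ n ∈ Λ, |a n| + 1 := by linarith
    refine ⟨2 * ∑ n ∈ Λ, |a n| + 1, hTpos, ?_⟩
    have hb : ∀ n ∈ Λ, Ghat (|a n| / (2 * ∑ k ∈ Λ, |a k| + 1))
        ≤ |a n| / (2 * ∑ k ∈ Λ, |a k| + 1) := by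
      intro n hn
      refine hGhat_small _ (div_nonneg (abs_nonneg _) hTpos.le) ?_
      have h1 : |a n| ≤ ∑ k ∈ Λ, |a k| :=
        Finset.single_le_sum (fun k _ => abs_nonneg (a k)) hn
      rw [div_le_iff₀ hTpos]; linarith
    calc ∑ n ∈ Λ, Ghat (|a n| / (2 * ∑ k ∈ Λ, |a k| + 1))
        ≤ ∑ n ∈ Λ, |a n| / (2 * ∑ k ∈ Λ, |a k| + 1) := Finset.sum_le_sum hb
      _ = (∑ n ∈ Λ, |a n|) / (2 * ∑ k ∈ Λ, |a k| + 1) := by rw [Finset.sum_div]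
      _ ≤ 1 := by rw [div_le_one hTpos]; linarith
  have hSFne : SFs.Nonempty := by
    have hTpos : (0:ℝ) < ∑ n ∈ Λ, |a n| + 1 := by linarith
    refine ⟨∑ n ∈ Λ, |a n| + 1, hTpos, ?_⟩
    rw [hInt _ hTpos]
    have hb : ∀ n ∈ Λ, F (s n * |a n| / (∑ k ∈ Λ, |a k| + 1)) * (F (s n))⁻¹
        ≤ |a n| / (∑ k ∈ Λ, |a k| + 1) := by
      intro n hn
      have hu0 : 0 ≤ |a n| / (∑ k ∈ Λ, |a k| + 1) := div_nonneg (abs_nonneg _) hTpos.le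
      have hu1 : |a n| / (∑ k ∈ Λ, |a k| + 1) ≤ 1 := by
        rw [div_le_one hTpos]
        have := Finset.single_le_sum (fun k (_ : k ∈ Λ) => abs_nonneg (a k)) hn
        linarith
      have h1 : F (s n * |a n| / (∑ k ∈ Λ, |a k| + 1))
          ≤ (|a n| / (∑ k ∈ Λ, |a k| + 1)) * F (s n) := by
        have h2 := F_scale hFconv hF0 (hspos n).le hu0 hu1
        have heq : (|a n| / (∑ k ∈ Λ, |a k| + 1)) * s n
            = s n * |a n| / (∑ k ∈ Λ, |a k| + 1) := by ring
        rwa [heq] at h2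
      calc F (s n * |a n| / (∑ k ∈ Λ, |a k| + 1)) * (F (s n))⁻¹
          ≤ ((|a n| / (∑ k ∈ Λ, |a k| + 1)) * F (s n)) * (F (s n))⁻¹ :=
            mul_le_mul_of_nonneg_right h1 (inv_nonneg.mpr (hFs n).le)
        _ = |a n| / (∑ k ∈ Λ, |a k| + 1) := by
            rw [mul_assoc, mul_inv_cancel₀ (hFs n).ne', mul_one]
    calc ∑ n ∈ Λ, F (s n * |a n| / (∑ k ∈ Λ, |a k| + 1)) * (F (s n))⁻¹
        ≤ ∑ n ∈ Λ, |a n| / (∑ k ∈ Λ, |a k| + 1) := Finset.sum_le_sum hb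
      _ = (∑ n ∈ Λ, |a n|) / (∑ k ∈ Λ, |a k| + 1) := by rw [Finset.sum_div]
      _ ≤ 1 := by rw [div_le_one hTpos]; linarith
  have h1 : ∀ t ∈ SGs, sInf SFs ≤ 2*t := by
    intro t ht
    have ht0 : (0:ℝ) < t := ht.1
    refine csInf_le hbddF ⟨by linarith, ?_⟩
    rw [hInt _ (by linarith : (0:ℝ) < 2*t)]
    exact claimA t ht0 ht.2
  have h2 : ∀ t ∈ SFs, sInf SGs ≤ 2*t := by
    intro t ht
    obtain ⟨ht0, hti⟩ := ht
    rw [hInt t ht0] at hti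
    exact csInf_le hbddG ⟨by linarith, claimB t ht0 hti⟩
  have h3 : sInf SGs ≤ 2 * sInf SFs := by
    have h4 : sInf SGs / 2 ≤ sInf SFs := le_csInf hSFne (fun t ht => by linarith [h2 t ht])
    linarith
  have h5 : sInf SFs ≤ 2 * sInf SGs := by
    have h6 : sInf SFs / 2 ≤ sInf SGs := le_csInf hSGne (fun t ht => by linarith [h1 t ht])
    linarith
  exact ⟨by linarith, h5⟩
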